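/- In a directed graph on a finite vertex set where every vertex has exactly one outgoing edge and exactly one incoming edge (a permutation), if there exists a function T from vertices to integers such that for every edge (u,v) with u ≠ d and v ≠ d (where d is a fixed depot vertex) we have T(v) ≥ T(u) + 1, then the graph consists of a single directed cycle through d (i.e., the permutation is a single cycle containing d). -/
import Mathlib


/-- MTZ correctness: if a permutation σ of a finite nonempty vertex set admits a rank
function `T : V → ℤ` with `T (σ u) ≥ T u + 1` for every edge `(u, σ u)` avoiding the
depot `d`, then the orbit of `d` under `σ` is all of `V` (single cycle through `d`). -/
theorem mtz_single_cycle {V : Type*} [Fintype V] [Nonempty V]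
    (σ : Equiv.Perm V) (d : V) (T : V → ℤ)
    (hT : ∀ u : V, u ≠ d → σ u ≠ d → T (σ u) ≥ T u + 1) :
    ∀ v : V, ∃ k : ℕ, (σ ^ k) d = v := by
  intro v
  by_contra h
  push_neg at h
  set n := orderOf σ with hn
  have hn1 : 1 ≤ n := (orderOf_pos σ)
  have hσn : σ ^ n = 1 := pow_orderOf_eq_one σ
  -- no power of σ sends v to d
  have hnd : ∀ k : ℕ, (σ ^ k) v ≠ d := by
    intro k hk
    apply h (k * (n - 1))
    have : (σ ^ (k * (n - 1))) ((σ ^ k) v) = v := by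
      rw [← Equiv.Perm.mul_apply, ← pow_add]
      have : k * (n - 1) + k = k * n := by
        rw [← Nat.mul_succ]; congr 1; omega
      rw [this, pow_mul', hσn, one_pow]
      rfl
    rw [hk] at this
    exact this
  -- T strictly increases along the orbit of v
  have key : ∀ m : ℕ, T ((σ ^ m) v) ≥ T v + m := by
    intro m
    induction m with
    | zero => simp
    | succ m ih =>
      have h1 : (σ ^ m) v ≠ d := hnd m
      have h2 : σ ((σ ^ m) v) ≠ d := by
        have := hnd (m + 1)
        rwa [pow_succ', Equiv.Perm.mul_apply] at this
      have := hT ((σ ^ m) v) h1 h2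
      rw [pow_succ', Equiv.Perm.mul_apply, Nat.cast_succ]
      linarith
  have := key n
  rw [hσn] at this
  simp at this
  omega
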